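/- Let $Z_0$ be the smallest positive root of $\frac{1}{4}\big(\frac{1}{(1-Z)^2} + Z\big) = 1$ (numerically $Z_0 \approx 0.4679$). For $\theta \in (0,\pi/2)$, every positive integer $j$ with $4^{1/3} j^{2/3} \sin^{2/3}\theta \le Z_0$ satisfies: with $\alpha = 4^{1/3} j^{2/3}\sin^{-1/3}\theta$ and $\beta = (1-\alpha\sin\theta)/\cos\theta$, the quantity $\frac{\cos^2\theta}{4(1-\alpha\sin\theta)^2} + \frac{j^2}{\alpha^2} < 1$. Consequently the number of integers $j$ with this property is at least $Z_0^{3/2}\cdot\frac{1}{2}\sin^{-1}\theta$, which tends to infinity like $\theta^{-1}$ as $\theta \to 0$. -/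

import Mathlib

open Real

theorem small_angle_eigenvalue_count (Z₀ : ℝ) (hZ₀pos : 0 < Z₀)
    (hZ₀root : (1 / 4) * (1 / (1 - Z₀) ^ 2 + Z₀) = 1)
    (hZ₀min : ∀ Z : ℝ, 0 < Z → (1 / 4) * (1 / (1 - Z) ^ 2 + Z) = 1 → Z₀ ≤ Z)
    (θ : ℝ) (hθ₁ : 0 < θ) (hθ₂ : θ < π / 2) :
    (∀ j : ℕ, 1 ≤ j →
      (4 : ℝ) ^ ((1 : ℝ) / 3) * (j : ℝ) ^ ((2 : ℝ) / 3) * (sin θ) ^ ((2 : ℝ) / 3) ≤ Z₀ →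
      cos θ ^ 2 /
          (4 * (1 - ((4 : ℝ) ^ ((1 : ℝ) / 3) * (j : ℝ) ^ ((2 : ℝ) / 3) *
              (sin θ) ^ (-(1 : ℝ) / 3)) * sin θ) ^ 2) +
        (j : ℝ) ^ 2 / ((4 : ℝ) ^ ((1 : ℝ) / 3) * (j : ℝ) ^ ((2 : ℝ) / 3) *
            (sin θ) ^ (-(1 : ℝ) / 3)) ^ 2 < 1) ∧
    (∀ m : ℕ, (m : ℝ) ≤ Z₀ ^ ((3 : ℝ) / 2) * (1 / 2) / sin θ →
      m ≤ Set.ncard {j : ℕ | 1 ≤ j ∧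
        (4 : ℝ) ^ ((1 : ℝ) / 3) * (j : ℝ) ^ ((2 : ℝ) / 3) * (sin θ) ^ ((2 : ℝ) / 3) ≤ Z₀}) := by
  have hπ : π / 2 < π := by linarith [pi_pos]
  have hs : 0 < sin θ := sin_pos_of_pos_of_lt_pi hθ₁ (hθ₂.trans hπ)
  -- Z₀ ≤ 1/2 via IVT on [1/4, 1/2]
  have hZ₀half : Z₀ ≤ 1 / 2 := by
    have hcont : ContinuousOn (fun Z : ℝ => (1 / 4) * (1 / (1 - Z) ^ 2 + Z))
        (Set.Icc (1/4 : ℝ) (1/2)) := by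
      apply continuousOn_const.mul
      apply ContinuousOn.add _ continuousOn_id
      apply continuousOn_const.div ((continuousOn_const.sub continuousOn_id).pow 2)
      intro x hx
      simp only [Set.mem_Icc] at hx
      have : (1 : ℝ) - x > 0 := by linarith [hx.2]
      exact pow_ne_zero 2 (ne_of_gt this)
    have hiv := intermediate_value_Icc (by norm_num : (1/4 : ℝ) ≤ 1/2) hcont
    have h1 : (1 : ℝ) ∈ Set.Icc ((1/4 : ℝ) * (1 / (1 - 1/4) ^ 2 + 1/4))
        ((1/4 : ℝ) * (1 / (1 - 1/2) ^ 2 + 1/2)) := by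
      constructor <;> norm_num
    obtain ⟨Z, hZmem, hZeq⟩ := hiv h1
    exact (hZ₀min Z (by linarith [hZmem.1]) hZeq).trans hZmem.2
  constructor
  · intro j hj hZle
    set s := sin θ with hsdef
    set Z : ℝ := (4 : ℝ) ^ ((1 : ℝ) / 3) * (j : ℝ) ^ ((2 : ℝ) / 3) * s ^ ((2 : ℝ) / 3) with hZdef
    set α : ℝ := (4 : ℝ) ^ ((1 : ℝ) / 3) * (j : ℝ) ^ ((2 : ℝ) / 3) * s ^ (-(1 : ℝ) / 3) with hαdef
    have hjpos : (0 : ℝ) < (j : ℝ) := by exact_mod_cast hj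
    have hZpos : 0 < Z := by
      apply mul_pos (mul_pos (rpow_pos_of_pos (by norm_num) _) (rpow_pos_of_pos hjpos _))
        (rpow_pos_of_pos hs _)
    have hαpos : 0 < α := by
      apply mul_pos (mul_pos (rpow_pos_of_pos (by norm_num) _) (rpow_pos_of_pos hjpos _))
        (rpow_pos_of_pos hs _)
    -- α * s = Z
    have hαs : α * s = Z := by
      have h1 : s ^ (-(1:ℝ)/3) * s = s ^ ((2:ℝ)/3) := by
        rw [show ((2:ℝ)/3) = (-(1:ℝ)/3) + 1 by norm_num, Real.rpow_add hs, Real.rpow_one]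
      rw [hαdef, hZdef, mul_assoc, h1, mul_assoc]
    -- j^2 / α^2 = Z / 4
    have hα2 : Z * α ^ 2 = 4 * (j : ℝ) ^ 2 := by
      have e4 : ((4:ℝ) ^ ((1:ℝ)/3)) ^ 2 = (4:ℝ) ^ ((2:ℝ)/3) := by
        rw [← Real.rpow_natCast ((4:ℝ) ^ ((1:ℝ)/3)) 2, ← Real.rpow_mul (by norm_num : (0:ℝ) ≤ 4)]
        norm_num
      have ej : ((j:ℝ) ^ ((2:ℝ)/3)) ^ 2 = (j:ℝ) ^ ((4:ℝ)/3) := by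
        rw [← Real.rpow_natCast ((j:ℝ) ^ ((2:ℝ)/3)) 2, ← Real.rpow_mul hjpos.le]
        norm_num
      have es : (s ^ (-(1:ℝ)/3)) ^ 2 = s ^ (-(2:ℝ)/3) := by
        rw [← Real.rpow_natCast (s ^ (-(1:ℝ)/3)) 2, ← Real.rpow_mul hs.le]
        norm_num
      have m4 : (4:ℝ) ^ ((1:ℝ)/3) * (4:ℝ) ^ ((2:ℝ)/3) = 4 := by
        rw [← Real.rpow_add (by norm_num : (0:ℝ) < 4)]; norm_num
      have mj : (j:ℝ) ^ ((2:ℝ)/3) * (j:ℝ) ^ ((4:ℝ)/3) = (j:ℝ) ^ 2 := by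
        rw [← Real.rpow_add hjpos]
        norm_num
      have ms : s ^ ((2:ℝ)/3) * s ^ (-(2:ℝ)/3) = 1 := by
        rw [← Real.rpow_add hs]; norm_num
      rw [hZdef, hαdef, mul_pow, mul_pow, e4, ej, es]
      calc (4:ℝ) ^ ((1:ℝ)/3) * (j:ℝ) ^ ((2:ℝ)/3) * s ^ ((2:ℝ)/3) *
            ((4:ℝ) ^ ((2:ℝ)/3) * (j:ℝ) ^ ((4:ℝ)/3) * s ^ (-(2:ℝ)/3))
          = ((4:ℝ) ^ ((1:ℝ)/3) * (4:ℝ) ^ ((2:ℝ)/3)) * ((j:ℝ) ^ ((2:ℝ)/3) * (j:ℝ) ^ ((4:ℝ)/3)) *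
            (s ^ ((2:ℝ)/3) * s ^ (-(2:ℝ)/3)) := by ring
        _ = 4 * (j:ℝ) ^ 2 := by rw [m4, mj, ms]; ring
    have hjα : (j:ℝ) ^ 2 / α ^ 2 = Z / 4 := by
      rw [div_eq_div_iff (by positivity : α ^ 2 ≠ 0) (by norm_num : (4:ℝ) ≠ 0)]
      linarith [hα2]
    rw [hαs, hjα]
    have hZZ₀ : Z ≤ Z₀ := hZle
    clear_value Z α
    clear hZdef hαdef hαs hα2 hjα hZle
    have h1Z : (0:ℝ) < 1 - Z := by linarith
    have h1Z₀ : (0:ℝ) < 1 - Z₀ := by linarith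
    have hcos1 : cos θ < 1 := by
      have := Real.cos_lt_cos_of_nonneg_of_le_pi (le_refl 0) (by linarith) hθ₁
      simpa using this
    have hcossq : cos θ ^ 2 < 1 := by
      have hc0 : 0 < cos θ := Real.cos_pos_of_mem_Ioo ⟨by linarith, hθ₂⟩
      nlinarith
    have hmono : 1 / (1 - Z) ^ 2 ≤ 1 / (1 - Z₀) ^ 2 := by
      apply one_div_le_one_div_of_le (by positivity)
      nlinarith
    have hD : (0:ℝ) < 4 * (1 - Z) ^ 2 := by positivity
    have hstep : cos θ ^ 2 / (4 * (1 - Z) ^ 2) < 1 / (4 * (1 - Z) ^ 2) :=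
      (div_lt_div_iff_of_pos_right hD).mpr hcossq
    calc cos θ ^ 2 / (4 * (1 - Z) ^ 2) + Z / 4
        < 1 / (4 * (1 - Z) ^ 2) + Z / 4 := by linarith
      _ ≤ 1 := by
          rw [show (4:ℝ) * (1 - Z) ^ 2 = (1 - Z) ^ 2 * 4 by ring, ← div_div]
          linarith [hmono, hZZ₀]
  · intro m hm
    set s := sin θ with hsdef
    have hB : ∀ j : ℕ, ((4 : ℝ) ^ ((1 : ℝ) / 3) * (j : ℝ) ^ ((2 : ℝ) / 3) * s ^ ((2 : ℝ) / 3) ≤ Z₀)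
        ↔ 2 * (j : ℝ) * s ≤ Z₀ ^ ((3:ℝ)/2) := by
      intro j
      have hLHS : ((4 : ℝ) ^ ((1 : ℝ) / 3) * (j : ℝ) ^ ((2 : ℝ) / 3) * s ^ ((2 : ℝ) / 3)) ^ ((3:ℝ)/2)
          = 2 * (j : ℝ) * s := by
        rw [Real.mul_rpow (by positivity) (by positivity), Real.mul_rpow (by positivity) (by positivity),
          ← Real.rpow_mul (by norm_num : (0:ℝ) ≤ 4), ← Real.rpow_mul (Nat.cast_nonneg j),
          ← Real.rpow_mul hs.le]
        norm_num
      rw [← Real.rpow_le_rpow_iff (by positivity) hZ₀pos.le (by norm_num : (0:ℝ) < 3/2), hLHS]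
    have hBle : ∀ j : ℕ, j ≤ m → (4 : ℝ) ^ ((1 : ℝ) / 3) * (j : ℝ) ^ ((2 : ℝ) / 3) * s ^ ((2 : ℝ) / 3) ≤ Z₀ := by
      intro j hjm
      rw [hB]
      have hjm' : (j : ℝ) ≤ m := by exact_mod_cast hjm
      have : (m : ℝ) * s ≤ Z₀ ^ ((3:ℝ)/2) * (1/2) := by
        calc (m:ℝ) * s ≤ (Z₀ ^ ((3:ℝ)/2) * (1 / 2) / s) * s := by
              apply mul_le_mul_of_nonneg_right hm hs.le
          _ = Z₀ ^ ((3:ℝ)/2) * (1/2) := by field_simp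
      nlinarith [mul_le_mul_of_nonneg_right hjm' hs.le]
    -- finiteness
    set S : Set ℕ := {j : ℕ | 1 ≤ j ∧
        (4 : ℝ) ^ ((1 : ℝ) / 3) * (j : ℝ) ^ ((2 : ℝ) / 3) * s ^ ((2 : ℝ) / 3) ≤ Z₀} with hSdef
    have hfin : S.Finite := by
      apply Set.Finite.subset (Set.finite_Iic ⌊Z₀ ^ ((3:ℝ)/2) / (2 * s)⌋₊)
      intro j hj
      obtain ⟨hj1, hj2⟩ := hj
      rw [hB j] at hj2
      simp only [Set.mem_Iic]
      apply Nat.le_floor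
      rw [le_div_iff₀ (by positivity)]
      linarith
    have hsub : Set.Icc 1 m ⊆ S := by
      intro j hj
      exact ⟨hj.1, hBle j hj.2⟩
    calc m = (Set.Icc 1 m).ncard := by
          rw [← Finset.coe_Icc, Set.ncard_coe_finset, Nat.card_Icc]; omega
      _ ≤ S.ncard := Set.ncard_le_ncard hsub hfin
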